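/- arXiv:2503.20647 — 4 statements merged into one kernel-verified Lean document; each statement's English description precedes it below -/
import Mathlib

section
/- Substitution on the left-hand side is derivable in the system I1–I6: for single variables x_1, x_2, y_1 and sequences z, v with |v| = |z| + 1, the atom zx_1 ⊆ v is derivable from the two atoms x_1x_2 ⊆ y_1y_1 and zx_2 ⊆ v using rules I1–I6. -/
/-- A team `T` (set of assignments `s : V → M`) satisfies the inclusion atom
`x ⊆ y` if for every `s ∈ T` there is `s' ∈ T` with `s(xᵢ) = s'(yᵢ)` for all `i`. -/
def TeamSat {V M : Type*} (T : Set (V → M)) (x y : List V) : Prop :=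
  ∀ s ∈ T, ∃ s' ∈ T, x.map s = y.map s'

/-- The derivation system I1–I6 for inclusion atoms (with repetitions). -/
inductive Derives {V : Type*} (Γ : Set (List V × List V)) : List V → List V → Prop
  | mem {x y : List V} : (x, y) ∈ Γ → Derives Γ x y
  | I1 (x : List V) : Derives Γ x x
  | I2 {x z y : List V} : Derives Γ x z → Derives Γ z y → Derives Γ x y
  | I3 {x y z u v w : List V} :
      Derives Γ (x ++ y ++ z) (u ++ v ++ w) →
      x.length = u.length → y.length = v.length → z.length = w.length →
      Derives Γ (x ++ z ++ y) (u ++ w ++ v)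
  | I4 {x y u v : List V} :
      Derives Γ (x ++ y) (u ++ v) → x.length = u.length → Derives Γ x u
  | I5 {x y u v : List V} :
      Derives Γ (x ++ y) (u ++ v) → x.length = u.length →
      Derives Γ (x ++ y ++ y) (u ++ v ++ v)
  | I6 {x1 x2 y1 : V} {z v : List V} :
      Derives Γ [x1, x2] [y1, y1] → Derives Γ z (v ++ [x2]) →
      Derives Γ z (v ++ [x1])

/-- Substitution on the left-hand side is derivable in I1–I6:
from `x₁x₂ ⊆ y₁y₁` and `zx₂ ⊆ v` one derives `zx₁ ⊆ v`. -/
theorem left_substitution_derivable {V : Type*}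
    (x1 x2 y1 : V) (z v : List V) (hv : v.length = z.length + 1) :
    Derives {([x1, x2], [y1, y1]), (z ++ [x2], v)} (z ++ [x1]) v := by
  have h1 : Derives {([x1, x2], [y1, y1]), (z ++ [x2], v)} [x1, x2] [y1, y1] :=
    Derives.mem (Or.inl rfl)
  have h2 : Derives {([x1, x2], [y1, y1]), (z ++ [x2], v)} (z ++ [x2]) v :=
    Derives.mem (Or.inr rfl)
  have hswap : Derives {([x1, x2], [y1, y1]), (z ++ [x2], v)} [x2, x1] [y1, y1] :=
    Derives.I3 (x := []) (y := [x1]) (z := [x2]) (u := []) (v := [y1]) (w := [y1])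
      h1 rfl rfl rfl
  exact Derives.I2 (Derives.I6 hswap (Derives.I1 (z ++ [x1]))) h2
end

section
/- For single variables u_1, u_2, y_1 and sequences u', v' of equal length, the atom u_1u_2u' ⊆ y_1y_1v' and the pair of atoms { u_1u' ⊆ y_1v', u_1u_2 ⊆ y_1y_1 } are inter-derivable in the system I1–I6: u_1u_2u' ⊆ y_1y_1v' derives each of u_1u' ⊆ y_1v' and u_1u_2 ⊆ y_1y_1, and conversely the set { u_1u' ⊆ y_1v', u_1u_2 ⊆ y_1y_1 } derives u_1u_2u' ⊆ y_1y_1v'. -/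
/-- `u₁u₂u' ⊆ y₁y₁v'` is inter-derivable with `{u₁u' ⊆ y₁v', u₁u₂ ⊆ y₁y₁}` in I1–I6. -/
theorem normal_form_interderivable {V : Type*}
    (u1 u2 y1 : V) (u' v' : List V) (h : u'.length = v'.length) :
    Derives {(u1 :: u2 :: u', y1 :: y1 :: v')} (u1 :: u') (y1 :: v') ∧
    Derives {(u1 :: u2 :: u', y1 :: y1 :: v')} [u1, u2] [y1, y1] ∧
    Derives {(u1 :: u', y1 :: v'), ([u1, u2], [y1, y1])}
      (u1 :: u2 :: u') (y1 :: y1 :: v') := by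

  refine ⟨?_, ?_, ?_⟩
  · have hm : Derives {(u1 :: u2 :: u', y1 :: y1 :: v')} ([u1] ++ [u2] ++ u')
        ([y1] ++ [y1] ++ v') := by
      simpa using Derives.mem (Γ := {(u1 :: u2 :: u', y1 :: y1 :: v')}) rfl
    have h3 := Derives.I3 hm rfl rfl h
    have h4 := Derives.I4 (x := [u1] ++ u') (y := [u2]) (u := [y1] ++ v') (v := [y1])
      (by simpa using h3) (by simp [h])
    simpa using h4
  · have hm : Derives {(u1 :: u2 :: u', y1 :: y1 :: v')} ([u1, u2] ++ u')
        ([y1, y1] ++ v') := by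
      simpa using Derives.mem (Γ := {(u1 :: u2 :: u', y1 :: y1 :: v')}) rfl
    exact Derives.I4 hm (by simp)
  · set Γ : Set (List V × List V) := {(u1 :: u', y1 :: v'), ([u1, u2], [y1, y1])} with hΓ
    have h1 : Derives Γ (u1 :: u') (y1 :: v') := Derives.mem (by simp [hΓ])
    have h12 : Derives Γ [u1, u2] [y1, y1] := Derives.mem (by simp [hΓ])
    have e2 : Derives Γ ([u1] ++ u' ++ [u2]) ([u1] ++ u' ++ [u2]) := Derives.I1 _
    have e3 := Derives.I6 h12 (z := [u1] ++ u' ++ [u2]) (v := [u1] ++ u') e2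
    have e4 := Derives.I3 (x := [u1]) (y := u') (z := [u2]) (u := [u1]) (v := u') (w := [u1])
      (by simpa using e3) rfl rfl rfl
    have f1 : Derives Γ (([] : List V) ++ (u1 :: u') ++ (u1 :: u'))
        (([] : List V) ++ (y1 :: v') ++ (y1 :: v')) :=
      Derives.I5 (by simpa using h1) rfl
    have f2 := Derives.I3 (x := [u1]) (y := u') (z := u1 :: u') (u := [y1]) (v := v')
      (w := y1 :: v') (by simpa using f1) rfl h (by simp [h])
    have f3 := Derives.I4 (x := u1 :: u1 :: u') (y := u') (u := y1 :: y1 :: v') (v := v')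
      (by simpa using f2) (by simp [h])
    exact Derives.I2 (by simpa using e4) f3
end

section
/- The axiom schema B3 is sound: let p and q be term sequences with |p| = |q| = n, and let A be a set of atoms of the form r ⊆ q with r_i ∈ {p_i, ⊤, ⊥} for all 1 ≤ i ≤ n, such that for every constant sequence 𝗑 ∈ {⊤,⊥}^n for which 𝗑 ⊆ p is consistent there exists some r ⊆ q ∈ A for which 𝗑 ⊆ r is consistent. If a Boolean team T satisfies every atom in A, then T ⊨ p ⊆ q. -/
/-- Terms: propositional variables or the Boolean constants ⊤, ⊥. -/
inductive Term (V : Type*) where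
  | var : V → Term V
  | top : Term V
  | bot : Term V

/-- Evaluation of a term under a Boolean assignment; `s(⊤) = 1` and `s(⊥) = 0`. -/
def Term.eval {V : Type*} (s : V → Bool) : Term V → Bool
  | .var v => s v
  | .top => true
  | .bot => false

/-- A Boolean team `T` satisfies the inclusion atom with Boolean constants
`p ⊆ q` if for every `s ∈ T` there is `s' ∈ T` with `s(pᵢ) = s'(qᵢ)` for all `i`. -/
def TTeamSat {V : Type*} (T : Set (V → Bool)) (p q : List (Term V)) : Prop :=
  ∀ s ∈ T, ∃ s' ∈ T, p.map (Term.eval s) = q.map (Term.eval s')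

/-- A sequence of constants from `{⊤, ⊥}`. -/
def IsConstSeq {V : Type*} (x : List (Term V)) : Prop :=
  ∀ t ∈ x, t = Term.top ∨ t = Term.bot

/-- `𝗑 ⊆ r` is consistent: the sequences have equal length, whenever `rᵢ` is a
constant then `rᵢ = 𝗑ᵢ`, and whenever `rᵢ = rⱼ` then `𝗑ᵢ = 𝗑ⱼ`. -/
def Consistent {V : Type*} (x r : List (Term V)) : Prop :=
  x.length = r.length ∧
  (∀ pr ∈ r.zip x, (pr.1 = Term.top ∨ pr.1 = Term.bot) → pr.1 = pr.2) ∧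
  (∀ pr ∈ r.zip x, ∀ pr' ∈ r.zip x, pr.1 = pr'.1 → pr.2 = pr'.2)

/-- Soundness of the axiom schema B3. -/
theorem B3_sound {V : Type*} (p q : List (Term V)) (hpq : p.length = q.length)
    (A : Set (List (Term V)))
    (hA : ∀ r ∈ A, r.length = p.length ∧
      ∀ pr ∈ r.zip p, pr.1 = pr.2 ∨ pr.1 = Term.top ∨ pr.1 = Term.bot)
    (hcov : ∀ x : List (Term V), IsConstSeq x → Consistent x p →
      ∃ r ∈ A, Consistent x r)
    (T : Set (V → Bool)) (hT : ∀ r ∈ A, TTeamSat T r q) :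
    TTeamSat T p q := by
  intro s hs
  set f : Term V → Term V := fun t => if t.eval s = true then Term.top else Term.bot with hf
  set x : List (Term V) := p.map f with hx
  have hzip : p.zip x = p.map fun a => (a, f a) := by
    simpa [hx] using List.zip_map' (f := fun a : Term V => a) (g := f) (l := p)
  have hmemx : ∀ pr ∈ p.zip x, pr.2 = f pr.1 := by
    intro pr hpr
    rw [hzip] at hpr
    obtain ⟨a, _, rfl⟩ := List.mem_map.mp hpr
    rfl
  have hevalf : ∀ t : Term V, (f t).eval s = t.eval s := by
    intro t
    cases hb : t.eval s <;> simp only [hf, hb] <;> simp [Term.eval]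
  have hconsx : Consistent x p := by
    refine ⟨by simp [hx], ?_, ?_⟩
    · intro pr hpr hc
      have h2 := hmemx pr hpr
      rcases hc with h | h <;> rw [h2, h] <;> simp [hf, Term.eval]
    · intro pr hpr pr' hpr' h1
      rw [hmemx pr hpr, hmemx pr' hpr', h1]
  have hconstx : IsConstSeq x := by
    intro t ht
    obtain ⟨a, _, rfl⟩ := List.mem_map.mp ht
    by_cases hb : a.eval s = true <;> simp [hf, hb]
  obtain ⟨r, hrA, hlen, hc2, _⟩ := hcov x hconstx hconsx
  obtain ⟨hrlen, hrp⟩ := hA r hrA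
  obtain ⟨s', hs', heq⟩ := hT r hrA s hs
  refine ⟨s', hs', ?_⟩
  rw [← heq]
  -- show p.map (eval s) = r.map (eval s)
  apply List.ext_getElem (by simp [hrlen])
  intro i h1 h2
  simp only [List.getElem_map]
  have hip : i < p.length := by simpa using h1
  have hir : i < r.length := by simpa using h2
  have hizp : i < (r.zip p).length := by
    simp only [List.length_zip, hrlen, Nat.min_self]; exact hip
  have hmem : (r[i]'hir, p[i]'hip) ∈ r.zip p := by
    rw [← List.getElem_zip (h := hizp)]
    exact List.getElem_mem hizp
  rcases hrp _ hmem with h | h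
  · exact (congrArg (Term.eval s) h).symm
  · -- r[i] is a constant, so r[i] = x[i] = f p[i]
    have hizx : i < (r.zip x).length := by
      simp only [List.length_zip, hlen, Nat.min_self]; exact hir
    have hmemx2 : (r[i]'hir, x[i]'(by simp [hx]; exact hip)) ∈ r.zip x := by
      rw [← List.getElem_zip (h := hizx)]
      exact List.getElem_mem hizx
    have hxg : x[i]'(by simp [hx, hrlen, hir]; omega) = f (p[i]'hip) := by
      simp [hx]
    have hr : r[i]'hir = f (p[i]'hip) := (hc2 _ hmemx2 h).trans hxg
    rw [hr, hevalf]
end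

section
/- Soundness of the rule (*): let n ≥ 1, let p = p_1…p_n and q = q_1…q_n be sequences of propositional variables with all 2n variables pairwise distinct, and let B = { ⊥^n ⊆ q } ∪ { r ⊆ q : there is exactly one i ∈ {1,…,n} with r_i = ⊤ and r_j = p_j for all j ≠ i }. Then every Boolean team satisfying all n+1 atoms of B satisfies p ⊆ q, i.e., B ⊨_bool p ⊆ q. -/
/-- The left-hand sides of the assumption set `B` of the rule (*): `⊥ⁿ`,
together with, for each `i < n`, the sequence agreeing with `p` except for a
single `⊤` at position `i` (so each such `r` has exactly one `i` with `rᵢ = ⊤`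
and `rⱼ = pⱼ` for `j ≠ i`). Each `r` here stands for the atom `r ⊆ q`. -/
def starAssumptions {V : Type*} (n : ℕ) (p : List V) : Set (List (Term V)) :=
  insert (List.replicate n Term.bot)
    {r | ∃ i < n, r = (p.map Term.var).set i Term.top}

/-- Soundness of the rule (*): the `n + 1` assumptions of `B` entail `p ⊆ q`. -/
theorem star_rule_sound {V : Type*} (n : ℕ) (hn : 1 ≤ n)
    (p q : List V) (hp : p.length = n) (hq : q.length = n)
    (hdist : (p ++ q).Nodup) :
    ∀ T : Set (V → Bool),
      (∀ r ∈ starAssumptions n p, TTeamSat T r (q.map Term.var)) →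
      TTeamSat T (p.map Term.var) (q.map Term.var) := by
  intro T hB s hs
  by_cases hex : ∃ i, ∃ h : i < p.length, s p[i] = true
  · obtain ⟨i, hi, hpi⟩ := hex
    have hr : (p.map Term.var).set i Term.top ∈ starAssumptions n p :=
      Or.inr ⟨i, hp ▸ hi, rfl⟩
    obtain ⟨s', hs', heq⟩ := hB _ hr s hs
    refine ⟨s', hs', ?_⟩
    rw [← heq, List.map_set]
    apply List.ext_getElem
    · simp
    intro j h1 h2
    rcases eq_or_ne j i with rfl | hne
    · simp [List.getElem_set, Term.eval, hpi]
    · simp [List.getElem_set, hne.symm]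
  · push_neg at hex
    have hall : ∀ j (h : j < p.length), s p[j] = false := by
      intro j h
      exact Bool.eq_false_iff.mpr (fun hc => (hex j h) hc)
    have hr : List.replicate n Term.bot ∈ starAssumptions n p := Or.inl rfl
    obtain ⟨s', hs', heq⟩ := hB _ hr s hs
    refine ⟨s', hs', ?_⟩
    rw [← heq]
    apply List.ext_getElem
    · simp [hp]
    intro j h1 h2
    simp only [List.getElem_map, List.getElem_replicate, Term.eval]
    exact hall j (by simpa using h1)
end
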